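/- Fix c with 0 < c < 1, and suppose that for every group a ∈ G the conditional law of p(X) given g(X) = a has positive density on [0,1]. Then there exist constants t_a ∈ [0,1] for a ∈ G such that the decision rule d*(x) = 1 if p(x) ≥ t_{g(x)} and d*(x) = 0 otherwise satisfies statistical parity, and u(d,c) ≤ u(d*,c) for every decision rule d satisfying statistical parity. -/

import Mathlib

open MeasureTheory ProbabilityTheory Set

noncomputable section

/-- A probability law on ℝ has positive density on `[0,1]`: it is absolutely continuous
w.r.t. Lebesgue measure with a density strictly positive Lebesgue-a.e. on `[0,1]`
that vanishes outside `[0,1]`. -/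
def PosDensity01 (ν : Measure ℝ) : Prop :=
  ∃ φ : ℝ → ENNReal,
    ν = volume.withDensity φ ∧
    (∀ᵐ x ∂(volume.restrict (Icc (0:ℝ) 1)), 0 < φ x) ∧
    (∀ᵐ x ∂(volume : Measure ℝ), x ∉ Icc (0:ℝ) 1 → φ x = 0)

/-- A decision rule `d` satisfies statistical parity:
`E[d(X) | g(X) = a] = E[d(X)]` for every group `a`. -/
def StatParity {Ω 𝒳 G : Type*} [MeasurableSpace Ω]
    (μ : Measure Ω) (X : Ω → 𝒳) (g : 𝒳 → G) (d : 𝒳 → ℝ) : Prop :=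
  ∀ a : G, (∫ ω in {ω | g (X ω) = a}, d (X ω) ∂μ) / (μ {ω | g (X ω) = a}).toReal
    = ∫ ω, d (X ω) ∂μ

namespace Stmt3Helper

variable {ν : Measure ℝ}

lemma outside_null (hν : PosDensity01 ν) : ν ((Icc (0:ℝ) 1)ᶜ) = 0 := by
  obtain ⟨φ, hφeq, -, h0⟩ := hν
  rw [hφeq, withDensity_apply _ measurableSet_Icc.compl]
  have h : ∀ᵐ x ∂(volume.restrict (Icc (0:ℝ) 1)ᶜ), φ x = 0 := by
    filter_upwards [ae_restrict_of_ae h0, ae_restrict_mem measurableSet_Icc.compl] with x h1 h2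
    exact h1 h2
  calc ∫⁻ x in (Icc (0:ℝ) 1)ᶜ, φ x = ∫⁻ x in (Icc (0:ℝ) 1)ᶜ, 0 := lintegral_congr_ae h
  _ = 0 := lintegral_zero

lemma ac (hν : PosDensity01 ν) : ν ≪ (volume : Measure ℝ) := by
  obtain ⟨φ, hφeq, -, -⟩ := hν
  rw [hφeq]; exact withDensity_absolutelyContinuous _ _

lemma singleton_null (hν : PosDensity01 ν) (x : ℝ) : ν {x} = 0 :=
  ac hν (Real.volume_singleton)

lemma Ici_eq_Ioi (hν : PosDensity01 ν) (b : ℝ) : ν (Ici b) = ν (Ioi b) := by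
  have h1 : Ici b = Ioi b ∪ {b} := by
    ext y; simp [le_iff_lt_or_eq, or_comm, eq_comm]
  apply le_antisymm
  · rw [h1]
    refine le_trans (measure_union_le _ _) ?_
    rw [singleton_null hν b]
    simp
  · exact measure_mono (Ioi_subset_Ici le_rfl)

/-- ae membership in `[0,1]` -/
lemma ae_mem01 (hν : PosDensity01 ν) : ∀ᵐ x ∂ν, x ∈ Icc (0:ℝ) 1 := by
  rw [ae_iff]
  have : {x : ℝ | ¬ x ∈ Icc (0:ℝ) 1} = (Icc (0:ℝ) 1)ᶜ := rfl
  rw [this]; exact outside_null hν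

lemma F_one (hν : PosDensity01 ν) : ν (Ici (1:ℝ)) = 0 := by
  rw [Ici_eq_Ioi hν]
  refine measure_mono_null ?_ (outside_null hν)
  intro x hx; simp only [mem_compl_iff, mem_Icc, mem_Ioi] at *
  intro h; linarith [h.2]

lemma F_zero (hν : PosDensity01 ν) [IsProbabilityMeasure ν] : ν (Ici (0:ℝ)) = 1 := by
  have h1 : ν (Iio (0:ℝ)) = 0 := by
    refine measure_mono_null ?_ (outside_null hν)
    intro x hx; simp only [mem_compl_iff, mem_Icc, mem_Iio] at *
    intro h; linarith [h.1]
  rw [← compl_Iio, measure_compl measurableSet_Iio (measure_ne_top _ _), h1, measure_univ]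
  simp

/-- continuity of the upper-tail function -/
lemma F_cont [IsFiniteMeasure ν] (hν : PosDensity01 ν) :
    Continuous fun t : ℝ => (ν (Ici t)).toReal := by
  rw [Metric.continuous_iff]
  intro b ε hε
  -- left approach
  have hleft : Filter.Tendsto (fun n : ℕ => (ν (Ici (b - 1/(n+1)))).toReal)
      Filter.atTop (nhds ((ν (Ici b)).toReal) ) := by
    have h1 : Filter.Tendsto (fun n : ℕ => ν (Ici (b - 1/(n+1)))) Filter.atTop (nhds (ν (Ici b))) := by
      have hiter : ⋂ n : ℕ, Ici (b - 1/(n+1)) = Ici b := by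
        ext x
        simp only [mem_iInter, mem_Ici]
        constructor
        · intro h
          by_contra hx
          push_neg at hx
          obtain ⟨n, hn⟩ := exists_nat_one_div_lt (show 0 < b - x by linarith)
          have := h n
          linarith
        · intro h n; have : (0:ℝ) < 1/(n+1) := by positivity
          linarith
      have := tendsto_measure_iInter_atTop (μ := ν)
        (fun n : ℕ => (measurableSet_Ici (a := b - 1/(n+1))).nullMeasurableSet)
        (fun i j hij => Ici_subset_Ici.mpr (by
          have h1 : ((i:ℝ)+1) ≤ ((j:ℝ)+1) := by exact_mod_cast Nat.succ_le_succ hij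
          have : (1:ℝ)/((j:ℝ)+1) ≤ 1/((i:ℝ)+1) := by
            apply one_div_le_one_div_of_le (by positivity) h1
          linarith))
        ⟨0, measure_ne_top _ _⟩
      rwa [hiter] at this
    exact (ENNReal.tendsto_toReal (measure_ne_top _ _)).comp h1
  have hright : Filter.Tendsto (fun n : ℕ => (ν (Ici (b + 1/(n+1)))).toReal)
      Filter.atTop (nhds ((ν (Ici b)).toReal) ) := by
    have h1 : Filter.Tendsto (fun n : ℕ => ν (Ici (b + 1/(n+1)))) Filter.atTop (nhds (ν (Ioi b))) := by
      have hiter : ⋃ n : ℕ, Ici (b + 1/(n+1)) = Ioi b := by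
        ext x
        simp only [mem_iUnion, mem_Ici, mem_Ioi]
        constructor
        · rintro ⟨n, hn⟩
          have hpos : (0:ℝ) < 1/((n:ℝ)+1) := by positivity
          linarith
        · intro h
          obtain ⟨n, hn⟩ := exists_nat_one_div_lt (show 0 < x - b by linarith)
          exact ⟨n, by linarith⟩
      have hmono2 : Monotone (fun n : ℕ => Ici (b + 1/((n:ℝ)+1))) := by
        intro i j hij
        apply Ici_subset_Ici.mpr
        have h1 : ((i:ℝ)+1) ≤ ((j:ℝ)+1) := by exact_mod_cast Nat.succ_le_succ hij
        have : (1:ℝ)/((j:ℝ)+1) ≤ 1/((i:ℝ)+1) := by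
          apply one_div_le_one_div_of_le (by positivity) h1
        linarith
      have := tendsto_measure_iUnion_atTop (μ := ν) hmono2
      rwa [hiter] at this
    rw [← Ici_eq_Ioi hν] at h1
    exact (ENNReal.tendsto_toReal (measure_ne_top _ _)).comp h1
  rw [Metric.tendsto_atTop] at hleft hright
  obtain ⟨n1, hn1⟩ := hleft ε hε
  obtain ⟨n2, hn2⟩ := hright ε hε
  set n := max n1 n2
  refine ⟨1/(n+1), by positivity, fun x hx => ?_⟩
  have hd1 := hn1 n (le_max_left _ _)
  have hd2 := hn2 n (le_max_right _ _)
  rw [Real.dist_eq] at hx hd1 hd2 ⊢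
  have hmono : ∀ s u : ℝ, s ≤ u → (ν (Ici u)).toReal ≤ (ν (Ici s)).toReal := fun s u h =>
    ENNReal.toReal_mono (measure_ne_top _ _) (measure_mono (Ici_subset_Ici.mpr h))
  have hx1 : b - 1/(n+1) ≤ x := by
    rw [abs_lt] at hx; linarith [hx.1]
  have hx2 : x ≤ b + 1/(n+1) := by
    rw [abs_lt] at hx; linarith [hx.2]
  have l1 := hmono _ _ hx1
  have l2 := hmono _ _ hx2
  rw [abs_lt] at hd1 hd2 ⊢
  constructor <;> nlinarith [l1, l2, hd1.1, hd1.2, hd2.1, hd2.2]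

end Stmt3Helper

namespace Stmt3Helper

variable {ν : Measure ℝ}

lemma integrable_id01 [IsProbabilityMeasure ν] (hν : PosDensity01 ν) :
    Integrable (fun x : ℝ => x) ν := by
  refine (integrable_const (1:ℝ)).mono' measurable_id.aestronglyMeasurable ?_
  filter_upwards [ae_mem01 hν] with x hx
  rw [Real.norm_eq_abs, abs_le]; exact ⟨by linarith [hx.1], hx.2⟩

lemma G_diff [IsProbabilityMeasure ν] (hν : PosDensity01 ν) {s t : ℝ} (hst : s ≤ t) :
    (∫ x in Ici t, x ∂ν) ≤ (∫ x in Ici s, x ∂ν) ∧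
    (∫ x in Ici s, x ∂ν) - (∫ x in Ici t, x ∂ν)
      ≤ (ν (Ici s)).toReal - (ν (Ici t)).toReal := by
  have hint := integrable_id01 hν
  have hdisj : Disjoint (Ico s t) (Ici t) := by
    rw [Set.disjoint_left]; intro x hx hx'
    exact absurd hx.2 (not_lt.mpr hx')
  have hsplit : (∫ x in Ici s, x ∂ν)
      = (∫ x in Ico s t, x ∂ν) + ∫ x in Ici t, x ∂ν := by
    rw [← setIntegral_union hdisj measurableSet_Ici hint.integrableOn hint.integrableOn,
      Ico_union_Ici_eq_Ici hst]
  have h0 : 0 ≤ ∫ x in Ico s t, x ∂ν := by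
    refine setIntegral_nonneg_ae measurableSet_Ico ?_
    filter_upwards [ae_mem01 hν] with x hx _
    exact hx.1
  have hub : (∫ x in Ico s t, x ∂ν) ≤ (ν (Ico s t)).toReal := by
    have h1 : (∫ x in Ico s t, x ∂ν) ≤ ∫ _x in Ico s t, (1:ℝ) ∂ν := by
      refine integral_mono_ae hint.integrableOn (integrable_const _) ?_
      exact ae_restrict_of_ae ((ae_mem01 hν).mono fun x hx => hx.2)
    simp at h1; exact h1
  have hIco : (ν (Ico s t)).toReal = (ν (Ici s)).toReal - (ν (Ici t)).toReal := by
    rw [← Ici_diff_Ici, measure_diff (Ici_subset_Ici.mpr hst)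
      measurableSet_Ici.nullMeasurableSet (measure_ne_top _ _),
      ENNReal.toReal_sub_of_le (measure_mono (Ici_subset_Ici.mpr hst)) (measure_ne_top _ _)]
  constructor
  · linarith
  · linarith [hIco ▸ hub]

end Stmt3Helper


/-- there exist group-specific thresholds `t_a ∈ [0,1]` such that the
threshold rule `d*(x) = 1{p(x) ≥ t_{g(x)}}` satisfies statistical parity and maximizes
the immediate utility `u(·,c)` among decision rules satisfying statistical parity. -/
theorem stmt_3
    {Ω 𝒳 G : Type*} [MeasurableSpace Ω] [MeasurableSpace 𝒳]
    [Fintype G] [MeasurableSpace G] [MeasurableSingletonClass G]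
    (μ : Measure Ω) [IsProbabilityMeasure μ]
    (X : Ω → 𝒳) (hX : Measurable X)
    (Y : Ω → ℝ) (hY : Measurable Y) (hY01 : ∀ ω, Y ω = 0 ∨ Y ω = 1)
    (p : 𝒳 → ℝ) (hp : Measurable p) (hp01 : ∀ x, p x ∈ Icc (0:ℝ) 1)
    (hrisk : ∀ f : 𝒳 → ℝ, Measurable f → (∃ C, ∀ x, |f x| ≤ C) →
      ∫ ω, Y ω * f (X ω) ∂μ = ∫ ω, p (X ω) * f (X ω) ∂μ)
    (g : 𝒳 → G) (hg : Measurable g)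
    (hgpos : ∀ a : G, 0 < μ {ω | g (X ω) = a})
    (hdens : ∀ a : G,
      PosDensity01 (Measure.map (fun ω => p (X ω))
        (ProbabilityTheory.cond μ {ω | g (X ω) = a})))
    (c : ℝ) (hc0 : 0 < c) (hc1 : c < 1) :
    ∃ t : G → ℝ, (∀ a : G, t a ∈ Icc (0:ℝ) 1) ∧
      StatParity μ X g (fun x => if t (g x) ≤ p x then (1:ℝ) else 0) ∧
      ∀ d : 𝒳 → ℝ, Measurable d → (∀ x, d x ∈ Icc (0:ℝ) 1) →
        StatParity μ X g d →
        (∫ ω, Y ω * d (X ω) ∂μ) - c * ∫ ω, d (X ω) ∂μ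
          ≤ (∫ ω, Y ω * (if t (g (X ω)) ≤ p (X ω) then (1:ℝ) else 0) ∂μ)
              - c * ∫ ω, (if t (g (X ω)) ≤ p (X ω) then (1:ℝ) else 0) ∂μ := by
  classical
  set S : G → Set Ω := fun a => {ω | g (X ω) = a} with hS
  have hgX : Measurable fun ω => g (X ω) := hg.comp hX
  have hpX : Measurable fun ω => p (X ω) := hp.comp hX
  have hSm : ∀ a, MeasurableSet (S a) := fun a => hgX (measurableSet_singleton a)
  have hSne : ∀ a, μ (S a) ≠ 0 := fun a => (hgpos a).ne'
  have hStop : ∀ a, μ (S a) ≠ ⊤ := fun a => measure_ne_top μ _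
  set w : G → ℝ := fun a => (μ (S a)).toReal with hw
  have hwpos : ∀ a, 0 < w a := fun a => ENNReal.toReal_pos (hSne a) (hStop a)
  set ν : G → Measure ℝ := fun a => Measure.map (fun ω => p (X ω)) (μ[|S a]) with hν
  have hcondP : ∀ a, IsProbabilityMeasure (μ[|S a]) := fun a =>
    cond_isProbabilityMeasure (hSne a)
  have hνP : ∀ a, IsProbabilityMeasure (ν a) := fun a =>
    haveI := hcondP a
    Measure.isProbabilityMeasure_map hpX.aemeasurable
  have hd : ∀ a, PosDensity01 (ν a) := hdens
  -- transfer of integrals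
  have transfer : ∀ (a : G) (f : ℝ → ℝ), Measurable f →
      ∫ ω in S a, f (p (X ω)) ∂μ = w a * ∫ x, f x ∂(ν a) := by
    intro a f hf
    rw [hν]
    rw [integral_map hpX.aemeasurable hf.aestronglyMeasurable]
    unfold ProbabilityTheory.cond
    rw [integral_smul_measure]
    simp only [smul_eq_mul]
    rw [ENNReal.toReal_inv, hw]
    rw [← mul_assoc, mul_inv_cancel₀ (hwpos a).ne', one_mul]
  -- tail function and partial expectation
  set F : G → ℝ → ℝ := fun a τ => ((ν a) (Ici τ)).toReal with hF
  set GG : G → ℝ → ℝ := fun a τ => ∫ x in Ici τ, x ∂(ν a) with hGG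
  have hF0 : ∀ a, F a 0 = 1 := fun a => by
    haveI := hνP a
    simp only [hF, Stmt3Helper.F_zero (hd a), ENNReal.toReal_one]
  have hF1 : ∀ a, F a 1 = 0 := fun a => by
    simp only [hF, Stmt3Helper.F_one (hd a), ENNReal.toReal_zero]
  have hFcont : ∀ a, Continuous (F a) := fun a =>
    haveI := hνP a
    Stmt3Helper.F_cont (hd a)
  have hsurj : ∀ (a : G) (β : ℝ), ∃ τ, β ∈ Icc (0:ℝ) 1 → τ ∈ Icc (0:ℝ) 1 ∧ F a τ = β := by
    intro a β
    by_cases hβ : β ∈ Icc (0:ℝ) 1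
    · have h := intermediate_value_Icc' (zero_le_one) (hFcont a).continuousOn
      rw [hF1 a, hF0 a] at h
      obtain ⟨τ, hτ, hτval⟩ := h hβ
      exact ⟨τ, fun _ => ⟨hτ, hτval⟩⟩
    · exact ⟨0, fun h => absurd h hβ⟩
  choose T hT using hsurj
  -- Lipschitz-type bound
  have hGTdiff : ∀ a, ∀ β1 β2, β1 ∈ Icc (0:ℝ) 1 → β2 ∈ Icc (0:ℝ) 1 →
      |GG a (T a β1) - GG a (T a β2)| ≤ |β1 - β2| := by
    have main : ∀ a, ∀ β1 β2, β1 ∈ Icc (0:ℝ) 1 → β2 ∈ Icc (0:ℝ) 1 →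
        T a β1 ≤ T a β2 →
        |GG a (T a β1) - GG a (T a β2)| ≤ |β1 - β2| := by
      intro a β1 β2 h1 h2 hle
      haveI := hνP a
      obtain ⟨hmono, hdiff⟩ := Stmt3Helper.G_diff (hd a) hle
      have e1 : F a (T a β1) = β1 := (hT a β1 h1).2
      have e2 : F a (T a β2) = β2 := (hT a β2 h2).2
      rw [abs_of_nonneg (by rw [hGG]; simpa using sub_nonneg.mpr hmono)]
      simp only [hGG]
      refine le_trans ?_ (le_abs_self _)
      simp only [hF] at e1 e2
      calc (∫ x in Ici (T a β1), x ∂ν a) - ∫ x in Ici (T a β2), x ∂ν a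
          ≤ ((ν a) (Ici (T a β1))).toReal - ((ν a) (Ici (T a β2))).toReal := hdiff
        _ = β1 - β2 := by rw [e1, e2]
    intro a β1 β2 h1 h2
    rcases le_total (T a β1) (T a β2) with h | h
    · exact main a β1 β2 h1 h2 h
    · rw [abs_sub_comm (GG a (T a β1)), abs_sub_comm β1]
      exact main a β2 β1 h2 h1 h
  -- partition facts
  have hUnion : (⋃ a, S a) = univ := by
    ext ω; simp only [hS, mem_iUnion, mem_setOf_eq, mem_univ, iff_true]
    exact ⟨g (X ω), rfl⟩
  have hdisjS : Pairwise (Function.onFun Disjoint S) := by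
    intro a b hab
    rw [Function.onFun, Set.disjoint_left]
    intro ω ha hb
    exact hab ((show g (X ω) = a from ha).symm.trans hb)
  have hsumw : ∑ a, w a = 1 := by
    have h1 : μ (⋃ a, S a) = ∑' a, μ (S a) := measure_iUnion hdisjS hSm
    rw [hUnion, measure_univ, tsum_fintype] at h1
    have h2 := congrArg ENNReal.toReal h1
    rw [ENNReal.toReal_sum (fun a _ => hStop a)] at h2
    simpa [hw] using h2.symm
  -- the objective function and its maximizer
  set V : ℝ → ℝ := fun β => (∑ a, w a * GG a (T a β)) - c * β with hV
  have hVlip : LipschitzOnWith 2 V (Icc (0:ℝ) 1) := by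
    apply LipschitzOnWith.of_dist_le_mul
    intro β1 h1 β2 h2
    rw [Real.dist_eq, Real.dist_eq]
    push_cast
    have h3 : |∑ a, (w a * GG a (T a β1) - w a * GG a (T a β2))| ≤ ∑ a, w a * |β1 - β2| := by
      refine (Finset.abs_sum_le_sum_abs _ _).trans ?_
      refine Finset.sum_le_sum fun a _ => ?_
      rw [← mul_sub, abs_mul, abs_of_nonneg (hwpos a).le]
      exact mul_le_mul_of_nonneg_left (hGTdiff a _ _ h1 h2) (hwpos a).le
    rw [← Finset.sum_mul, hsumw, one_mul] at h3
    have h4 : V β1 - V β2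
        = (∑ a, (w a * GG a (T a β1) - w a * GG a (T a β2))) - c * (β1 - β2) := by
      simp only [hV, Finset.sum_sub_distrib]
      ring
    have h5 : |c * (β1 - β2)| ≤ |β1 - β2| := by
      rw [abs_mul, abs_of_nonneg hc0.le]
      nlinarith [abs_nonneg (β1 - β2)]
    calc |V β1 - V β2| ≤ |∑ a, (w a * GG a (T a β1) - w a * GG a (T a β2))|
          + |c * (β1 - β2)| := by rw [h4]; exact abs_sub _ _
      _ ≤ |β1 - β2| + |β1 - β2| := add_le_add h3 h5
      _ = 2 * |β1 - β2| := by ring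
  obtain ⟨βs, hβs, hβmaxOn⟩ := isCompact_Icc.exists_isMaxOn
    (nonempty_Icc.mpr zero_le_one) hVlip.continuousOn
  have hmax : ∀ β ∈ Icc (0:ℝ) 1, V β ≤ V βs := fun β hβ => hβmaxOn hβ
  -- integral computations
  have mkInt : ∀ f : Ω → ℝ, Measurable f → (∃ C, ∀ ω, |f ω| ≤ C) → Integrable f μ := by
    rintro f hf ⟨C, hC⟩
    refine (integrable_const C).mono' hf.aestronglyMeasurable ?_
    exact Filter.Eventually.of_forall fun ω => by simpa [Real.norm_eq_abs] using hC ω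
  have hmeasite : ∀ τ : ℝ, Measurable fun x : ℝ => if τ ≤ x then (1:ℝ) else 0 := fun τ =>
    Measurable.ite measurableSet_Ici measurable_const measurable_const
  have hAccept : ∀ (a : G) (τ : ℝ),
      ∫ ω in S a, (if τ ≤ p (X ω) then (1:ℝ) else 0) ∂μ = w a * F a τ := by
    intro a τ
    rw [transfer a _ (hmeasite τ)]
    congr 1
    have he : (fun x : ℝ => if τ ≤ x then (1:ℝ) else 0)
        = (Ici τ).indicator (fun _ => (1:ℝ)) := by
      funext x; by_cases h : τ ≤ x <;> simp [Set.indicator_apply, mem_Ici, h]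
    rw [he, integral_indicator_const _ measurableSet_Ici]
    simp [hF]; rfl
  have hGval : ∀ (a : G) (τ : ℝ),
      ∫ ω in S a, p (X ω) * (if τ ≤ p (X ω) then (1:ℝ) else 0) ∂μ = w a * GG a τ := by
    intro a τ
    have hfm : Measurable fun x : ℝ => x * (if τ ≤ x then (1:ℝ) else 0) :=
      measurable_id.mul (hmeasite τ)
    rw [show (∫ ω in S a, p (X ω) * (if τ ≤ p (X ω) then (1:ℝ) else 0) ∂μ)
        = ∫ ω in S a, (fun x => x * (if τ ≤ x then (1:ℝ) else 0)) (p (X ω)) ∂μ from rfl,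
      transfer a _ hfm]
    congr 1
    have he : (fun x : ℝ => x * (if τ ≤ x then (1:ℝ) else 0))
        = (Ici τ).indicator (fun x => x) := by
      funext x; by_cases h : τ ≤ x <;> simp [Set.indicator_apply, mem_Ici, h]
    rw [he, integral_indicator measurableSet_Ici]
  have decomp : ∀ f : Ω → ℝ, Integrable f μ →
      ∫ ω, f ω ∂μ = ∑ a, ∫ ω in S a, f ω ∂μ := by
    intro f hf
    have h1 : ∫ ω in (⋃ a, S a), f ω ∂μ = ∑' a, ∫ ω in S a, f ω ∂μ :=
      integral_iUnion hSm hdisjS hf.integrableOn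
    rw [hUnion, setIntegral_univ] at h1
    rw [h1, tsum_fintype]
  -- the chosen thresholds
  have htmem : ∀ a, T a βs ∈ Icc (0:ℝ) 1 := fun a => (hT a βs hβs).1
  have htF : ∀ a, F a (T a βs) = βs := fun a => (hT a βs hβs).2
  have hdstar_meas : Measurable fun x => if T (g x) βs ≤ p x then (1:ℝ) else 0 := by
    refine Measurable.ite ?_ measurable_const measurable_const
    exact measurableSet_le ((measurable_of_countable fun a => T a βs).comp hg) hp
  have hdstarX_int : Integrable (fun ω => if T (g (X ω)) βs ≤ p (X ω) then (1:ℝ) else 0) μ :=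
    mkInt _ (hdstar_meas.comp hX) ⟨1, fun ω => by split <;> simp⟩
  have hstarS : ∀ a, ∫ ω in S a, (if T (g (X ω)) βs ≤ p (X ω) then (1:ℝ) else 0) ∂μ
      = w a * βs := by
    intro a
    have hcongr : EqOn (fun ω => if T (g (X ω)) βs ≤ p (X ω) then (1:ℝ) else 0)
        (fun ω => if T a βs ≤ p (X ω) then (1:ℝ) else 0) (S a) := by
      intro ω hω
      have hgω : g (X ω) = a := hω
      simp only [hgω]
    rw [setIntegral_congr_fun (hSm a) hcongr, hAccept a _, htF a]
  have hstar_total : ∫ ω, (if T (g (X ω)) βs ≤ p (X ω) then (1:ℝ) else 0) ∂μ = βs := by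
    rw [decomp _ hdstarX_int, Finset.sum_congr rfl fun a _ => hstarS a,
      ← Finset.sum_mul, hsumw, one_mul]
  have hpdstarX_int : Integrable
      (fun ω => p (X ω) * (if T (g (X ω)) βs ≤ p (X ω) then (1:ℝ) else 0)) μ := by
    refine mkInt _ (hpX.mul (hdstar_meas.comp hX)) ⟨1, fun ω => ?_⟩
    
    rcases le_or_gt (T (g (X ω)) βs) (p (X ω)) with h | h
    · rw [if_pos h, mul_one]
      exact abs_le.mpr ⟨by linarith [(hp01 (X ω)).1], (hp01 (X ω)).2⟩
    · rw [if_neg (not_le.mpr h), mul_zero]; simp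
  have hpdstarS : ∀ a,
      ∫ ω in S a, p (X ω) * (if T (g (X ω)) βs ≤ p (X ω) then (1:ℝ) else 0) ∂μ
      = w a * GG a (T a βs) := by
    intro a
    have hcongr : EqOn (fun ω => p (X ω) * (if T (g (X ω)) βs ≤ p (X ω) then (1:ℝ) else 0))
        (fun ω => p (X ω) * (if T a βs ≤ p (X ω) then (1:ℝ) else 0)) (S a) := by
      intro ω hω
      have hgω : g (X ω) = a := hω
      simp only [hgω]
    rw [setIntegral_congr_fun (hSm a) hcongr, hGval a _]
  have hpdstar_total :
      ∫ ω, p (X ω) * (if T (g (X ω)) βs ≤ p (X ω) then (1:ℝ) else 0) ∂μ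
      = ∑ a, w a * GG a (T a βs) := by
    rw [decomp _ hpdstarX_int]
    exact Finset.sum_congr rfl fun a _ => hpdstarS a
  refine ⟨fun a => T a βs, fun a => htmem a, ?_, ?_⟩
  · -- statistical parity of the threshold rule
    intro b
    show (∫ ω in S b, (if T (g (X ω)) βs ≤ p (X ω) then (1:ℝ) else 0) ∂μ) / (μ (S b)).toReal
      = ∫ ω, (if T (g (X ω)) βs ≤ p (X ω) then (1:ℝ) else 0) ∂μ
    rw [hstar_total, hstarS b]
    show w b * βs / w b = βs
    rw [mul_comm, mul_div_assoc, div_self (hwpos b).ne', mul_one]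
  · -- optimality
    intro d hdm hd01 hpar
    have hd_bound : ∃ C, ∀ x, |d x| ≤ C :=
      ⟨1, fun x => abs_le.mpr ⟨by linarith [(hd01 x).1], (hd01 x).2⟩⟩
    have hdX_int : Integrable (fun ω => d (X ω)) μ :=
      mkInt _ (hdm.comp hX)
        ⟨1, fun ω => abs_le.mpr ⟨by linarith [(hd01 (X ω)).1], (hd01 (X ω)).2⟩⟩
    have hpdX_int : Integrable (fun ω => p (X ω) * d (X ω)) μ := by
      refine mkInt _ (hpX.mul (hdm.comp hX)) ⟨1, fun ω => ?_⟩
      rw [abs_mul]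
      have h1 : |p (X ω)| ≤ 1 := abs_le.mpr ⟨by linarith [(hp01 (X ω)).1], (hp01 (X ω)).2⟩
      have h2 : |d (X ω)| ≤ 1 := abs_le.mpr ⟨by linarith [(hd01 (X ω)).1], (hd01 (X ω)).2⟩
      nlinarith [abs_nonneg (p (X ω)), abs_nonneg (d (X ω))]
    set βd := ∫ ω, d (X ω) ∂μ with hβd
    have hβd01 : βd ∈ Icc (0:ℝ) 1 := by
      constructor
      · exact integral_nonneg fun ω => (hd01 _).1
      · calc ∫ ω, d (X ω) ∂μ ≤ ∫ _ω, (1:ℝ) ∂μ :=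
            integral_mono hdX_int (integrable_const 1) fun ω => (hd01 _).2
          _ = 1 := by simp
    show (∫ ω, Y ω * d (X ω) ∂μ) - c * βd
      ≤ (∫ ω, Y ω * (if T (g (X ω)) βs ≤ p (X ω) then (1:ℝ) else 0) ∂μ)
        - c * ∫ ω, (if T (g (X ω)) βs ≤ p (X ω) then (1:ℝ) else 0) ∂μ
    have hr1 : ∫ ω, Y ω * d (X ω) ∂μ = ∫ ω, p (X ω) * d (X ω) ∂μ :=
      hrisk d hdm hd_bound
    have hr2 : ∫ ω, Y ω * (if T (g (X ω)) βs ≤ p (X ω) then (1:ℝ) else 0) ∂μ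
        = ∫ ω, p (X ω) * (if T (g (X ω)) βs ≤ p (X ω) then (1:ℝ) else 0) ∂μ :=
      hrisk _ hdstar_meas ⟨1, fun x => by split <;> simp⟩
    rw [hr1, hr2, hstar_total, hpdstar_total]
    -- parity value per group for d
    have hdS : ∀ a, ∫ ω in S a, d (X ω) ∂μ = w a * βd := by
      intro a
      have h := hpar a
      have e1 : {ω | g (X ω) = a} = S a := rfl
      rw [e1, ← hβd] at h
      rw [div_eq_iff (show (μ (S a)).toReal ≠ 0 from (hwpos a).ne')] at h
      rw [h, mul_comm]
    -- Neyman-Pearson per group at level βd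
    have key : ∀ a, ∫ ω in S a, p (X ω) * d (X ω) ∂μ ≤ w a * GG a (T a βd) := by
      intro a
      set τ := T a βd with hτdef
      have hτ01 : τ ∈ Icc (0:ℝ) 1 := (hT a βd hβd01).1
      have hτF : F a τ = βd := (hT a βd hβd01).2
      have hpoint : ∀ ω ∈ S a, (p (X ω) - τ) * d (X ω)
          ≤ (p (X ω) - τ) * (if τ ≤ p (X ω) then (1:ℝ) else 0) := by
        intro ω _
        rcases le_or_gt τ (p (X ω)) with h | h
        · rw [if_pos h, mul_one]
          nlinarith [(hd01 (X ω)).2, (hd01 (X ω)).1]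
        · rw [if_neg (not_le.mpr h), mul_zero]
          nlinarith [(hd01 (X ω)).1, (hd01 (X ω)).2]
      have hint1 : Integrable (fun ω => (p (X ω) - τ) * d (X ω)) μ := by
        refine mkInt _ ((hpX.sub measurable_const).mul (hdm.comp hX)) ⟨2, fun ω => ?_⟩
        rw [abs_mul]
        have h1 : |p (X ω) - τ| ≤ 1 := abs_le.mpr
          ⟨by linarith [(hp01 (X ω)).1, hτ01.2], by linarith [(hp01 (X ω)).2, hτ01.1]⟩
        have h2 : |d (X ω)| ≤ 1 := abs_le.mpr ⟨by linarith [(hd01 (X ω)).1], (hd01 (X ω)).2⟩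
        nlinarith [abs_nonneg (p (X ω) - τ), abs_nonneg (d (X ω))]
      have hint2 : Integrable (fun ω => (p (X ω) - τ) * (if τ ≤ p (X ω) then (1:ℝ) else 0)) μ := by
        refine mkInt _ ((hpX.sub measurable_const).mul ((hmeasite τ).comp hpX)) ⟨2, fun ω => ?_⟩
        rw [abs_mul]
        have h1 : |p (X ω) - τ| ≤ 1 := abs_le.mpr
          ⟨by linarith [(hp01 (X ω)).1, hτ01.2], by linarith [(hp01 (X ω)).2, hτ01.1]⟩
        have h2 : |(if τ ≤ p (X ω) then (1:ℝ) else 0)| ≤ 1 := by split <;> simp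
        nlinarith [abs_nonneg (p (X ω) - τ), abs_nonneg (if τ ≤ p (X ω) then (1:ℝ) else 0)]
      have hmono := setIntegral_mono_on hint1.integrableOn hint2.integrableOn (hSm a) hpoint
      have expandL : ∫ ω in S a, (p (X ω) - τ) * d (X ω) ∂μ
          = (∫ ω in S a, p (X ω) * d (X ω) ∂μ) - τ * ∫ ω in S a, d (X ω) ∂μ := by
        have he : (fun ω => (p (X ω) - τ) * d (X ω))
            = fun ω => p (X ω) * d (X ω) - τ * d (X ω) := by funext ω; ring
        rw [he, integral_sub hpdX_int.integrableOn (hdX_int.integrableOn.const_mul τ),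
          integral_const_mul]
      have expandR : ∫ ω in S a, (p (X ω) - τ) * (if τ ≤ p (X ω) then (1:ℝ) else 0) ∂μ
          = (∫ ω in S a, p (X ω) * (if τ ≤ p (X ω) then (1:ℝ) else 0) ∂μ)
            - τ * ∫ ω in S a, (if τ ≤ p (X ω) then (1:ℝ) else 0) ∂μ := by
        have hi1 : Integrable (fun ω => p (X ω) * (if τ ≤ p (X ω) then (1:ℝ) else 0)) μ := by
          refine mkInt _ (hpX.mul ((hmeasite τ).comp hpX)) ⟨1, fun ω => ?_⟩
          rcases le_or_gt τ (p (X ω)) with h | h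
          · rw [if_pos h, mul_one]
            exact abs_le.mpr ⟨by linarith [(hp01 (X ω)).1], (hp01 (X ω)).2⟩
          · rw [if_neg (not_le.mpr h), mul_zero]; simp
        have hi2 : Integrable (fun ω => (if τ ≤ p (X ω) then (1:ℝ) else 0)) μ :=
          mkInt _ ((hmeasite τ).comp hpX) ⟨1, fun ω => by split <;> simp⟩
        have he : (fun ω => (p (X ω) - τ) * (if τ ≤ p (X ω) then (1:ℝ) else 0))
            = fun ω => p (X ω) * (if τ ≤ p (X ω) then (1:ℝ) else 0)
                - τ * (if τ ≤ p (X ω) then (1:ℝ) else 0) := by funext ω; ring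
        rw [he, integral_sub hi1.integrableOn (hi2.integrableOn.const_mul τ),
          integral_const_mul]
      rw [expandL, expandR, hAccept a τ, hGval a τ, hdS a, hτF] at hmono
      linarith
    have sum_pd : ∫ ω, p (X ω) * d (X ω) ∂μ ≤ ∑ a, w a * GG a (T a βd) := by
      rw [decomp _ hpdX_int]
      exact Finset.sum_le_sum fun a _ => key a
    have hVd : V βd ≤ V βs := hmax βd hβd01
    simp only [hV] at hVd
    linarith
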